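/- arXiv:2105.12813 — 2 statements merged into one kernel-verified Lean document; each statement's English description precedes it below -/
import Mathlib

section
/- For any real number ε with 0 < ε < 1/e, there exist a constant C > 0 and a real number Λ with 0 < Λ < 1 such that for all positive integers n and ℓ with ℓ ≥ (1 − 1/e + ε)·n and ℓ ≤ n, one has n^{−n}·∑_{j=ℓ}^{n} a(n,j) ≤ C·n^{3/2}·Λ^n. -/
noncomputable def stirling2 (n j : ℕ) : ℝ :=
  (1 / (Nat.factorial j : ℝ)) *
    ∑ i ∈ Finset.range (j + 1), (-1 : ℝ) ^ i * (Nat.choose j i : ℝ) * ((j - i : ℕ) : ℝ) ^ n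

noncomputable def a (n j : ℕ) : ℝ :=
  (Nat.choose n j : ℝ) * (Nat.factorial j : ℝ) * stirling2 n j

noncomputable def T (n j : ℕ) : ℝ :=
  ∑ i ∈ Finset.range (j + 1), (-1 : ℝ) ^ i * (Nat.choose j i : ℝ) * ((j - i : ℕ) : ℝ) ^ n

lemma a_eq (n j : ℕ) : a n j = (Nat.choose n j : ℝ) * T n j := by
  have hj : (Nat.factorial j : ℝ) ≠ 0 := by positivity
  rw [a, stirling2, T]
  field_simp

lemma T_rec (n j : ℕ) :
    T (n + 1) (j + 1) = ((j : ℝ) + 1) * (T n (j + 1) + T n j) := by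
  have key : ∀ i, (((j + 1).choose i : ℝ)) * ((j + 1 - i : ℕ) : ℝ) =
      ((j : ℝ) + 1) * (j.choose i : ℝ) := by
    intro i
    have h := Nat.choose_mul_succ_eq j i
    have h2 : ((j.choose i * (j + 1) : ℕ) : ℝ) = (((j + 1).choose i * (j + 1 - i) : ℕ) : ℝ) := by
      exact_mod_cast congrArg (Nat.cast : ℕ → ℝ) h
    push_cast [Nat.cast_sub] at h2 ⊢
    linarith
  -- Step A
  have stepA : T (n + 1) (j + 1) =
      ((j : ℝ) + 1) * ∑ i ∈ Finset.range (j + 2),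
        (-1 : ℝ) ^ i * (j.choose i : ℝ) * ((j + 1 - i : ℕ) : ℝ) ^ n := by
    rw [T, Finset.mul_sum]
    apply Finset.sum_congr rfl
    intro i _
    have hx := key i
    calc (-1:ℝ)^i * (((j+1).choose i : ℕ) :ℝ) * ((j+1-i:ℕ):ℝ)^(n+1)
        = (-1:ℝ)^i * ((((j+1).choose i : ℕ) :ℝ) * ((j+1-i:ℕ):ℝ)) * ((j+1-i:ℕ):ℝ)^n := by
          ring
      _ = (-1:ℝ)^i * (((j:ℝ)+1) * ((j.choose i : ℕ):ℝ)) * ((j+1-i:ℕ):ℝ)^n := by rw [hx]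
      _ = ((j:ℝ)+1) * ((-1:ℝ)^i * ((j.choose i : ℕ):ℝ) * ((j+1-i:ℕ):ℝ)^n) := by ring
  -- U : drop last (zero) term
  have stepB : ∑ i ∈ Finset.range (j + 2),
        (-1 : ℝ) ^ i * (j.choose i : ℝ) * ((j + 1 - i : ℕ) : ℝ) ^ n =
      ∑ i ∈ Finset.range (j + 1),
        (-1 : ℝ) ^ i * (j.choose i : ℝ) * ((j + 1 - i : ℕ) : ℝ) ^ n := by
    rw [Finset.sum_range_succ, Nat.choose_succ_self]
    simp
  -- Step C : T n (j+1) + T n j = U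
  have stepC : T n (j + 1) + T n j =
      ∑ i ∈ Finset.range (j + 1),
        (-1 : ℝ) ^ i * (j.choose i : ℝ) * ((j + 1 - i : ℕ) : ℝ) ^ n := by
    have hV : T n (j + 1) = ((j:ℝ)+1)^n - T n j -
        ∑ i ∈ Finset.range (j + 1), (-1 : ℝ) ^ i * (j.choose (i+1) : ℝ) * ((j - i : ℕ) : ℝ) ^ n := by
      rw [T, Finset.sum_range_succ']
      have : ∀ i ∈ Finset.range (j + 1),
          (-1 : ℝ) ^ (i+1) * ((j+1).choose (i+1) : ℝ) * ((j + 1 - (i+1) : ℕ) : ℝ) ^ n =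
          -((-1:ℝ)^i * (j.choose i : ℝ) * ((j - i : ℕ):ℝ)^n)
            - (-1:ℝ)^i * (j.choose (i+1) : ℝ) * ((j - i : ℕ):ℝ)^n := by
        intro i _
        rw [Nat.choose_succ_succ]
        push_cast
        simp only [Nat.succ_eq_add_one]
        ring
      rw [Finset.sum_congr rfl this]
      rw [Finset.sum_sub_distrib, Finset.sum_neg_distrib]
      simp [T]
      ring
    have hU : ∑ i ∈ Finset.range (j + 1),
        (-1 : ℝ) ^ i * (j.choose i : ℝ) * ((j + 1 - i : ℕ) : ℝ) ^ n =
        ((j:ℝ)+1)^n -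
        ∑ i ∈ Finset.range (j + 1), (-1 : ℝ) ^ i * (j.choose (i+1) : ℝ) * ((j - i : ℕ) : ℝ) ^ n := by
      rw [Finset.sum_range_succ']
      have h1 : ∀ i ∈ Finset.range j,
          (-1 : ℝ) ^ (i+1) * (j.choose (i+1) : ℝ) * ((j + 1 - (i+1) : ℕ) : ℝ) ^ n =
          -((-1:ℝ)^i * (j.choose (i+1) : ℝ) * ((j - i : ℕ):ℝ)^n) := by
        intro i _
        have : (j + 1 - (i+1) : ℕ) = (j - i : ℕ) := by omega
        rw [this]; ring
      rw [Finset.sum_congr rfl h1]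
      have h2 : ∑ i ∈ Finset.range (j+1), (-1 : ℝ) ^ i * (j.choose (i+1) : ℝ) * ((j - i : ℕ) : ℝ) ^ n
          = ∑ i ∈ Finset.range j, (-1 : ℝ) ^ i * (j.choose (i+1) : ℝ) * ((j - i : ℕ) : ℝ) ^ n := by
        rw [Finset.sum_range_succ, Nat.choose_succ_self]
        simp
      rw [h2, Finset.sum_neg_distrib]
      simp
      ring
    rw [hV, hU]
    ring
  rw [stepA, stepB, ← stepC]

lemma T_zero (j : ℕ) : T 0 j = if j = 0 then 1 else 0 := by
  have h : T 0 j = ∑ i ∈ Finset.range (j + 1), (-1 : ℝ) ^ i * (1:ℝ) ^ (j - i) * (j.choose i : ℝ) := by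
    rw [T]
    apply Finset.sum_congr rfl
    intro i _
    simp [pow_zero]
  rw [h, ← Commute.add_pow (Commute.all (-1 : ℝ) 1) j]
  norm_num
  cases j <;> simp

lemma T_left_zero (n : ℕ) : T (n+1) 0 = 0 := by
  simp [T]

lemma T_nonneg : ∀ n j, 0 ≤ T n j := by
  intro n
  induction n with
  | zero => intro j; rw [T_zero]; split <;> norm_num
  | succ n ih =>
    intro j
    cases j with
    | zero => rw [T_left_zero]
    | succ j =>
      have := T_rec n j
      rw [this]
      have h1 := ih (j+1)
      have h2 := ih j
      positivity

lemma exp_nat (m : ℕ) : Real.exp m = Real.exp 1 ^ m := by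
  rw [← Real.exp_nat_mul]; norm_num

lemma tsum_T (j : ℕ) : ∑' m : ℕ, T m j / m.factorial = (Real.exp 1 - 1) ^ j := by
  have hsummand : ∀ i ∈ Finset.range (j+1),
      Summable (fun m : ℕ => (-1 : ℝ) ^ i * (j.choose i : ℝ) * (((j - i : ℕ) : ℝ) ^ m / m.factorial)) := by
    intro i _
    exact (Real.summable_pow_div_factorial _).mul_left _
  have h1 : ∀ m : ℕ, T m j / m.factorial =
      ∑ i ∈ Finset.range (j+1),
        (-1 : ℝ) ^ i * (j.choose i : ℝ) * (((j - i : ℕ) : ℝ) ^ m / m.factorial) := by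
    intro m
    rw [T, Finset.sum_div]
    apply Finset.sum_congr rfl
    intro i _
    ring
  calc ∑' m : ℕ, T m j / m.factorial
      = ∑' m : ℕ, ∑ i ∈ Finset.range (j+1),
          (-1 : ℝ) ^ i * (j.choose i : ℝ) * (((j - i : ℕ) : ℝ) ^ m / m.factorial) := by
        exact tsum_congr h1
    _ = ∑ i ∈ Finset.range (j+1), ∑' m : ℕ,
          (-1 : ℝ) ^ i * (j.choose i : ℝ) * (((j - i : ℕ) : ℝ) ^ m / m.factorial) := by
        exact Summable.tsum_finsetSum hsummand
    _ = ∑ i ∈ Finset.range (j+1),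
          (-1 : ℝ) ^ i * (j.choose i : ℝ) * Real.exp ((j - i : ℕ)) := by
        apply Finset.sum_congr rfl
        intro i _
        rw [tsum_mul_left]
        congr 1
        rw [Real.exp_eq_exp_ℝ, NormedSpace.exp_eq_tsum_div]
    _ = ∑ i ∈ Finset.range (j+1),
          (-1 : ℝ) ^ i * (Real.exp 1) ^ (j - i) * (j.choose i : ℝ) := by
        apply Finset.sum_congr rfl
        intro i _
        rw [exp_nat]
        ring
    _ = (Real.exp 1 - 1) ^ j := by
        rw [← Commute.add_pow (Commute.all (-1 : ℝ) (Real.exp 1)) j]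
        ring_nf

lemma T_le (n j : ℕ) : T n j ≤ (n.factorial : ℝ) * (Real.exp 1 - 1) ^ j := by
  have hs : Summable (fun m : ℕ => T m j / m.factorial) := by
    have : (fun m : ℕ => T m j / m.factorial) = fun m => ∑ i ∈ Finset.range (j+1),
        (-1 : ℝ) ^ i * (j.choose i : ℝ) * (((j - i : ℕ) : ℝ) ^ m / m.factorial) := by
      funext m
      rw [T, Finset.sum_div]
      apply Finset.sum_congr rfl
      intro i _
      ring
    rw [this]
    apply summable_sum
    intro i _
    exact (Real.summable_pow_div_factorial _).mul_left _
  have h := Summable.le_tsum hs n (fun m _ => div_nonneg (T_nonneg m j) (by positivity))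
  rw [tsum_T] at h
  rw [div_le_iff₀ (by positivity : (0:ℝ) < (n.factorial : ℝ))] at h
  linarith

lemma e_le_pow (n : ℕ) (hn : 0 < n) : Real.exp 1 * (n:ℝ)^(n+1) ≤ ((n:ℝ)+1)^(n+1) := by
  have hn' : (0:ℝ) < n := by exact_mod_cast hn
  have hx : (1:ℝ) < 1 + 1/(n:ℝ) := by
    have : 0 < 1/(n:ℝ) := by positivity
    linarith
  have hx0 : (0:ℝ) < 1 + 1/(n:ℝ) := by linarith
  have hlog : 1/((n:ℝ)+1) ≤ Real.log (1 + 1/(n:ℝ)) := by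
    have h2 : (0:ℝ) < (n:ℝ)/((n:ℝ)+1) := by positivity
    have := Real.log_le_sub_one_of_pos h2
    have hinv : ((n:ℝ)/((n:ℝ)+1))⁻¹ = 1 + 1/(n:ℝ) := by
      field_simp
    rw [← hinv, Real.log_inv]
    have : -Real.log ((n:ℝ)/((n:ℝ)+1)) ≥ 1 - (n:ℝ)/((n:ℝ)+1) := by linarith
    have heq : 1 - (n:ℝ)/((n:ℝ)+1) = 1/((n:ℝ)+1) := by field_simp; ring
    linarith [heq ▸ this]
  have hexp : Real.exp 1 ≤ (1 + 1/(n:ℝ))^(n+1) := by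
    have h3 : Real.exp 1 ≤ Real.exp (((n+1:ℕ) : ℝ) * Real.log (1 + 1/(n:ℝ))) := by
      apply Real.exp_le_exp.mpr
      have h := mul_le_mul_of_nonneg_left hlog (by positivity : (0:ℝ) ≤ ((n+1:ℕ):ℝ))
      calc (1:ℝ) = ((n+1:ℕ):ℝ) * (1/((n:ℝ)+1)) := by push_cast; field_simp
        _ ≤ _ := h
    have h4 : Real.exp (((n+1:ℕ) : ℝ) * Real.log (1 + 1/(n:ℝ))) = (1 + 1/(n:ℝ))^(n+1) := by
      rw [Real.exp_nat_mul, Real.exp_log hx0]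
    rw [h4] at h3
    exact h3
  have hfin : (1 + 1/(n:ℝ))^(n+1) * (n:ℝ)^(n+1) = ((n:ℝ)+1)^(n+1) := by
    rw [← mul_pow]
    congr 1
    field_simp
  calc Real.exp 1 * (n:ℝ)^(n+1) ≤ (1 + 1/(n:ℝ))^(n+1) * (n:ℝ)^(n+1) := by
        apply mul_le_mul_of_nonneg_right hexp (by positivity)
    _ = ((n:ℝ)+1)^(n+1) := hfin

lemma factorial_bound (n : ℕ) (hn : 0 < n) :
    (n.factorial : ℝ) * Real.exp 1 ^ n ≤ Real.exp 1 * n * (n:ℝ)^n := by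
  induction n with
  | zero => omega
  | succ n ih =>
    rcases Nat.eq_zero_or_pos n with h0 | hpos
    · subst h0; simp [Nat.factorial]
    · have h1 := ih hpos
      have he : (0:ℝ) < Real.exp 1 := Real.exp_pos 1
      have key := e_le_pow n hpos
      have hn' : (0:ℝ) < n := by exact_mod_cast hpos
      calc ((n+1).factorial : ℝ) * Real.exp 1 ^ (n+1)
          = ((n:ℝ)+1) * Real.exp 1 * ((n.factorial : ℝ) * Real.exp 1 ^ n) := by
            push_cast [Nat.factorial_succ]; ring
        _ ≤ ((n:ℝ)+1) * Real.exp 1 * (Real.exp 1 * n * (n:ℝ)^n) := by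
            apply mul_le_mul_of_nonneg_left h1; positivity
        _ = ((n:ℝ)+1) * Real.exp 1 * (Real.exp 1 * (n:ℝ)^(n+1)) := by ring
        _ ≤ ((n:ℝ)+1) * Real.exp 1 * ((n:ℝ)+1)^(n+1) := by
            apply mul_le_mul_of_nonneg_left key; positivity
        _ = Real.exp 1 * ((n:ℕ)+1 : ℝ) * (((n:ℕ):ℝ)+1)^(n+1) := by ring
        _ = Real.exp 1 * ((n+1 : ℕ):ℝ) * (((n+1:ℕ)):ℝ)^(n+1) := by push_cast; ring

theorem stmt_2 (ε : ℝ) (hε0 : 0 < ε) (hε1 : ε < 1 / Real.exp 1) :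
    ∃ C Λ : ℝ, 0 < C ∧ 0 < Λ ∧ Λ < 1 ∧
      ∀ n ℓ : ℕ, 0 < n → 0 < ℓ → (1 - 1 / Real.exp 1 + ε) * n ≤ (ℓ : ℝ) → ℓ ≤ n →
        (n : ℝ) ^ (-(n : ℝ)) * ∑ j ∈ Finset.Icc ℓ n, a n j ≤
          C * (n : ℝ) ^ ((3 : ℝ) / 2) * Λ ^ n := by
  set e : ℝ := Real.exp 1 with he_def
  have he1 : (1:ℝ) < e := by
    have := Real.exp_one_gt_d9
    rw [he_def]; linarith
  set δ : ℝ := ε / 2 with hδ_def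
  have hδ0 : 0 < δ := by positivity
  set β : ℝ := 1 - e⁻¹ with hβ_def
  have hβ0 : 0 < β := by
    have : e⁻¹ < 1 := inv_lt_one_of_one_lt₀ he1
    rw [hβ_def]; linarith
  have hβ1 : β < 1 := by
    have : 0 < e⁻¹ := by positivity
    rw [hβ_def]; linarith
  set K : ℝ := 1 + β * δ with hK_def
  have hK1 : (1:ℝ) < K := by nlinarith
  have hb0 : (0:ℝ) < 1 + δ := by linarith
  have hb1 : (1:ℝ) < 1 + δ := by linarith
  set Λ : ℝ := K / (1 + δ) ^ (β + ε) with hΛ_def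
  have hrp : (0:ℝ) < (1 + δ) ^ (β + ε) := Real.rpow_pos_of_pos hb0 _
  have hΛ0 : 0 < Λ := by
    apply div_pos (by nlinarith) hrp
  have hΛ1 : Λ < 1 := by
    rw [hΛ_def, div_lt_one hrp, hK_def]
    have hlog : δ / (1 + δ) ≤ Real.log (1 + δ) := by
      have h2 : (0:ℝ) < (1 + δ)⁻¹ := by positivity
      have h3 := Real.log_le_sub_one_of_pos h2
      rw [Real.log_inv] at h3
      have : (1+δ)⁻¹ - 1 = -(δ/(1+δ)) := by field_simp; ring
      rw [this] at h3
      linarith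
    have h4 : (1 + δ) ^ (β + ε) = Real.exp ((β + ε) * Real.log (1 + δ)) := by
      rw [Real.rpow_def_of_pos hb0, mul_comm]
    rw [h4]
    have h5 : 1 + (β + ε) * Real.log (1 + δ) ≤ Real.exp ((β + ε) * Real.log (1 + δ)) := by
      have := Real.add_one_le_exp ((β + ε) * Real.log (1 + δ)); linarith
    have h6 : β * δ < (β + ε) * Real.log (1 + δ) := by
      have h7 : (β + ε) * (δ / (1 + δ)) ≤ (β + ε) * Real.log (1 + δ) := by
        apply mul_le_mul_of_nonneg_left hlog (by linarith)
      have hβδ : β * δ < ε := by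
        have h01 := mul_lt_mul_of_pos_right hβ1 hδ0
        rw [one_mul] at h01
        rw [hδ_def] at h01 ⊢
        linarith
      have h8 : β * δ < (β + ε) * (δ / (1 + δ)) := by
        have key : (β * δ) * (1 + δ) < (β + ε) * δ := by
          nlinarith [mul_lt_mul_of_pos_right hβδ hδ0]
        have hr : (β + ε) * (δ / (1 + δ)) = ((β + ε) * δ) / (1 + δ) := by ring
        rw [hr, lt_div_iff₀ hb0]
        exact key
      exact lt_of_lt_of_le h8 h7
    linarith
  refine ⟨e, Λ, by linarith, hΛ0, hΛ1, ?_⟩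
  intro n ℓ hn hℓ hlow hup
  have hn' : (0:ℝ) < n := by exact_mod_cast hn
  set u : ℝ := e - 1 with hu_def
  have hu0 : 0 < u := by rw [hu_def]; linarith
  -- step 1 : bound the sum
  have step1 : ∑ j ∈ Finset.Icc ℓ n, a n j ≤
      (n.factorial : ℝ) * ∑ j ∈ Finset.Icc ℓ n, (n.choose j : ℝ) * u ^ j := by
    rw [Finset.mul_sum]
    apply Finset.sum_le_sum
    intro j _
    rw [a_eq]
    calc (n.choose j : ℝ) * T n j ≤ (n.choose j : ℝ) * ((n.factorial : ℝ) * u ^ j) := by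
          apply mul_le_mul_of_nonneg_left (T_le n j) (by positivity)
      _ = (n.factorial : ℝ) * ((n.choose j : ℝ) * u ^ j) := by ring
  -- step 2 : Chernoff
  have step2 : (1 + δ) ^ ℓ * ∑ j ∈ Finset.Icc ℓ n, (n.choose j : ℝ) * u ^ j ≤
      (1 + u * (1 + δ)) ^ n := by
    rw [Finset.mul_sum]
    calc ∑ j ∈ Finset.Icc ℓ n, (1 + δ) ^ ℓ * ((n.choose j : ℝ) * u ^ j)
        ≤ ∑ j ∈ Finset.Icc ℓ n, (n.choose j : ℝ) * (u * (1 + δ)) ^ j := by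
          apply Finset.sum_le_sum
          intro j hj
          rw [Finset.mem_Icc] at hj
          have h9 : (1 + δ) ^ ℓ ≤ (1 + δ) ^ j := pow_le_pow_right₀ (le_of_lt hb1) hj.1
          calc (1 + δ) ^ ℓ * ((n.choose j : ℝ) * u ^ j)
              ≤ (1 + δ) ^ j * ((n.choose j : ℝ) * u ^ j) := by
                apply mul_le_mul_of_nonneg_right h9 (by positivity)
            _ = (n.choose j : ℝ) * (u * (1 + δ)) ^ j := by rw [mul_pow]; ring
      _ ≤ ∑ j ∈ Finset.range (n+1), (n.choose j : ℝ) * (u * (1 + δ)) ^ j := by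
          apply Finset.sum_le_sum_of_subset_of_nonneg
          · intro j hj
            rw [Finset.mem_Icc] at hj
            rw [Finset.mem_range]
            omega
          · intro j _ _
            positivity
      _ = (1 + u * (1 + δ)) ^ n := by
          rw [add_comm (1:ℝ) (u * (1+δ)), add_pow]
          apply Finset.sum_congr rfl
          intro j _
          ring
  -- factorial bound
  have step3 : (n.factorial : ℝ) * e ^ n ≤ e * n * (n:ℝ)^n := factorial_bound n hn
  -- combine
  have hcomb : 1 + u * (1 + δ) = e * K := by
    rw [hu_def, hK_def, hβ_def]
    field_simp
    ring
  have hpos_sum : 0 ≤ ∑ j ∈ Finset.Icc ℓ n, (n.choose j : ℝ) * u ^ j := by positivity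
  have main1 : ∑ j ∈ Finset.Icc ℓ n, a n j ≤ e * n * (n:ℝ)^n * K^n / (1 + δ)^ℓ := by
    rw [le_div_iff₀ (by positivity : (0:ℝ) < (1+δ)^ℓ)]
    calc (∑ j ∈ Finset.Icc ℓ n, a n j) * (1 + δ)^ℓ
        ≤ ((n.factorial : ℝ) * ∑ j ∈ Finset.Icc ℓ n, (n.choose j : ℝ) * u ^ j) * (1 + δ)^ℓ := by
          apply mul_le_mul_of_nonneg_right step1 (by positivity)
      _ = (n.factorial : ℝ) * ((1 + δ)^ℓ * ∑ j ∈ Finset.Icc ℓ n, (n.choose j : ℝ) * u ^ j) := by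
          ring
      _ ≤ (n.factorial : ℝ) * (1 + u * (1 + δ)) ^ n := by
          apply mul_le_mul_of_nonneg_left step2 (by positivity)
      _ = (n.factorial : ℝ) * e ^ n * K ^ n := by rw [hcomb, mul_pow]; ring
      _ ≤ e * n * (n:ℝ)^n * K ^ n := by
          apply mul_le_mul_of_nonneg_right step3 (by positivity)
  -- rewrite LHS
  have hrw : (n : ℝ) ^ (-(n : ℝ)) = ((n:ℝ)^n)⁻¹ := by
    rw [Real.rpow_neg (le_of_lt hn'), Real.rpow_natCast]
  rw [hrw]
  have hnn : (0:ℝ) < (n:ℝ)^n := by positivity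
  have main2 : ((n:ℝ)^n)⁻¹ * ∑ j ∈ Finset.Icc ℓ n, a n j ≤ e * n * K^n / (1 + δ)^ℓ := by
    calc ((n:ℝ)^n)⁻¹ * ∑ j ∈ Finset.Icc ℓ n, a n j
        ≤ ((n:ℝ)^n)⁻¹ * (e * n * (n:ℝ)^n * K^n / (1 + δ)^ℓ) := by
          apply mul_le_mul_of_nonneg_left main1 (by positivity)
      _ = e * n * K^n / (1 + δ)^ℓ := by
          field_simp
  -- compare denominators
  have hdenom : ((1 + δ) ^ (β + ε))^n ≤ (1 + δ)^ℓ := by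
    have h10 : ((1 + δ) ^ (β + ε))^n = (1 + δ) ^ ((β + ε) * n) := by
      rw [← Real.rpow_natCast ((1 + δ) ^ (β + ε)) n, ← Real.rpow_mul (le_of_lt hb0)]
    have h11 : (1 + δ) ^ ((β + ε) * n) ≤ (1 + δ) ^ (ℓ:ℝ) := by
      apply Real.rpow_le_rpow_of_exponent_le (le_of_lt hb1)
      rw [hβ_def]
      rw [one_div] at hlow
      exact hlow
    rw [h10, ← Real.rpow_natCast (1 + δ) ℓ]
    exact h11
  have main3 : e * n * K^n / (1 + δ)^ℓ ≤ e * n * Λ^n := by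
    have h12 : e * n * Λ^n = e * n * K^n / ((1 + δ) ^ (β + ε))^n := by
      rw [hΛ_def, div_pow]; ring
    rw [h12]
    apply div_le_div_of_nonneg_left (by positivity) (by positivity) hdenom
  -- n ≤ n^{3/2}
  have hn32 : (n:ℝ) ≤ (n:ℝ) ^ ((3:ℝ)/2) := by
    calc (n:ℝ) = (n:ℝ) ^ ((1:ℝ)) := (Real.rpow_one _).symm
      _ ≤ (n:ℝ) ^ ((3:ℝ)/2) := by
        apply Real.rpow_le_rpow_of_exponent_le (by exact_mod_cast hn) (by norm_num)
  calc ((n:ℝ)^n)⁻¹ * ∑ j ∈ Finset.Icc ℓ n, a n j ≤ e * n * Λ^n := le_trans main2 main3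
    _ ≤ e * (n:ℝ) ^ ((3:ℝ)/2) * Λ^n := by
      apply mul_le_mul_of_nonneg_right
        (mul_le_mul_of_nonneg_left hn32 (by linarith : (0:ℝ) ≤ e)) (by positivity)
end

section
/- For every pair of integers n, j with n ≥ 2 and 1 ≤ j ≤ n−1, (1/(2√n))·(n^{1−j/n}·η(j/n))^n ≤ C(n,j)·j^{n−j} ≤ (n^{1−j/n}·η(j/n))^n. -/
open Real

noncomputable def varphi (x : ℝ) : ℝ := x ^ (-x) * (1 - x) ^ (-(1 - x))

noncomputable def eta (x : ℝ) : ℝ := x ^ (1 - x) * varphi x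


lemma sqrtpi_le_stirling (m : ℕ) (hm : 1 ≤ m) : Real.sqrt π ≤ Stirling.stirlingSeq m := by
  refine le_of_tendsto Stirling.tendsto_stirlingSeq_sqrt_pi ?_
  filter_upwards [Filter.eventually_ge_atTop m] with i hi
  obtain ⟨m', rfl⟩ := Nat.exists_eq_add_of_le hm
  obtain ⟨i', rfl⟩ := Nat.exists_eq_add_of_le (le_trans hm hi)
  have h : m' ≤ i' := by omega
  simpa [Nat.succ_eq_add_one, Nat.add_comm] using Stirling.stirlingSeq'_antitone h

lemma stirling_le (m : ℕ) (hm : 1 ≤ m) : Stirling.stirlingSeq m ≤ Real.exp 1 / Real.sqrt 2 := by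
  rw [← Stirling.stirlingSeq_one]
  obtain ⟨m', rfl⟩ := Nat.exists_eq_add_of_le hm
  simpa [Nat.add_comm] using Stirling.stirlingSeq'_antitone (Nat.zero_le m')

lemma fact_lower' (m : ℕ) (hm : 1 ≤ m) :
    Real.sqrt π * (Real.sqrt (2 * m) * (m : ℝ) ^ m) ≤ (m.factorial : ℝ) * Real.exp 1 ^ m := by
  have hmR : (0:ℝ) < m := by exact_mod_cast hm
  have hD : 0 < Real.sqrt (2 * m) * ((m : ℝ) / Real.exp 1) ^ m := by positivity
  have h := sqrtpi_le_stirling m hm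
  rw [Stirling.stirlingSeq, le_div_iff₀ hD] at h
  have hE : (0:ℝ) < Real.exp 1 ^ m := by positivity
  have h2 := mul_le_mul_of_nonneg_right h hE.le
  calc Real.sqrt π * (Real.sqrt (2 * m) * (m : ℝ) ^ m)
      = Real.sqrt π * (Real.sqrt (2 * ↑m) * (↑m / Real.exp 1) ^ m) * Real.exp 1 ^ m := by
        rw [div_pow]; field_simp
    _ ≤ (m.factorial : ℝ) * Real.exp 1 ^ m := h2

lemma fact_upper' (m : ℕ) (hm : 1 ≤ m) :
    (m.factorial : ℝ) * Real.exp 1 ^ m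
      ≤ (Real.exp 1 / Real.sqrt 2) * (Real.sqrt (2 * m) * (m : ℝ) ^ m) := by
  have hmR : (0:ℝ) < m := by exact_mod_cast hm
  have hD : 0 < Real.sqrt (2 * m) * ((m : ℝ) / Real.exp 1) ^ m := by positivity
  have h := stirling_le m hm
  rw [Stirling.stirlingSeq, div_le_iff₀ hD] at h
  have hE : (0:ℝ) < Real.exp 1 ^ m := by positivity
  have h2 := mul_le_mul_of_nonneg_right h hE.le
  calc (m.factorial : ℝ) * Real.exp 1 ^ m
      ≤ Real.exp 1 / Real.sqrt 2 * (Real.sqrt (2 * ↑m) * (↑m / Real.exp 1) ^ m) * Real.exp 1 ^ m := h2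
    _ = (Real.exp 1 / Real.sqrt 2) * (Real.sqrt (2 * m) * (m : ℝ) ^ m) := by
        rw [div_pow]; field_simp

set_option maxHeartbeats 800000 in
lemma choose_lower (n j k : ℕ) (hj : 1 ≤ j) (hk : 1 ≤ k) (h : j + k = n) :
    (n : ℝ) ^ n ≤ 2 * Real.sqrt n * (n.choose j : ℝ) * ((j : ℝ) ^ j * (k : ℝ) ^ k) := by
  have hn : 1 ≤ n := by omega
  have hnR : (0:ℝ) < n := by exact_mod_cast hn
  have hjR : (0:ℝ) < j := by exact_mod_cast hj
  have hkR : (0:ℝ) < k := by exact_mod_cast hk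
  set C : ℝ := (n.choose j : ℝ) with hCdef
  have hC0 : 0 < C := by
    rw [hCdef]
    exact_mod_cast Nat.choose_pos (show j ≤ n by omega)
  have hfact : C * (j.factorial : ℝ) * (k.factorial : ℝ) = (n.factorial : ℝ) := by
    have := Nat.choose_mul_factorial_mul_factorial (show j ≤ n by omega)
    have hk' : n - j = k := by omega
    rw [hk'] at this
    rw [hCdef]
    exact_mod_cast this
  have hE : (0:ℝ) < Real.exp 1 := Real.exp_pos 1
  -- chain
  have H1 : Real.sqrt π * (Real.sqrt (2 * n) * (n : ℝ) ^ n)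
      ≤ C * ((Real.exp 1 / Real.sqrt 2) * (Real.sqrt (2 * j) * (j : ℝ) ^ j))
          * ((Real.exp 1 / Real.sqrt 2) * (Real.sqrt (2 * k) * (k : ℝ) ^ k)) := by
    calc Real.sqrt π * (Real.sqrt (2 * n) * (n : ℝ) ^ n)
        ≤ (n.factorial : ℝ) * Real.exp 1 ^ n := fact_lower' n hn
      _ = C * ((j.factorial : ℝ) * Real.exp 1 ^ j) * ((k.factorial : ℝ) * Real.exp 1 ^ k) := by
          rw [← hfact, ← h, pow_add]; ring
      _ ≤ C * ((Real.exp 1 / Real.sqrt 2) * (Real.sqrt (2 * j) * (j : ℝ) ^ j))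
          * ((Real.exp 1 / Real.sqrt 2) * (Real.sqrt (2 * k) * (k : ℝ) ^ k)) := by
          have u1 := fact_upper' j hj
          have u2 := fact_upper' k hk
          have p1 : (0:ℝ) ≤ (j.factorial : ℝ) * Real.exp 1 ^ j := by positivity
          have p2 : (0:ℝ) ≤ (k.factorial : ℝ) * Real.exp 1 ^ k := by positivity
          have q1 : (0:ℝ) ≤ (Real.exp 1 / Real.sqrt 2) * (Real.sqrt (2 * j) * (j : ℝ) ^ j) := by
            positivity
          gcongr
  -- sqrt bounds
  have hjkle : Real.sqrt (2 * j) * Real.sqrt (2 * k) ≤ (n : ℝ) := by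
    rw [← Real.sqrt_mul (by positivity)]
    have h4 : (2 * (j:ℝ)) * (2 * k) ≤ (n:ℝ) ^ 2 := by
      have : ((j:ℝ) + k) = n := by exact_mod_cast congrArg (Nat.cast : ℕ → ℝ) h
      nlinarith [sq_nonneg ((j:ℝ) - k)]
    calc Real.sqrt (2 * (j:ℝ) * (2 * k)) ≤ Real.sqrt ((n:ℝ)^2) := by
          apply Real.sqrt_le_sqrt; linarith
      _ = (n : ℝ) := by rw [Real.sqrt_sq hnR.le]
  have hnum : (Real.exp 1 / Real.sqrt 2) ^ 2 ≤ 2 * Real.sqrt 2 * Real.sqrt π := by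
    have hs2 : Real.sqrt 2 ^ 2 = 2 := Real.sq_sqrt (by norm_num)
    have hexp : Real.exp 1 ≤ 2.7182818286 := (Real.exp_one_lt_d9).le
    have hpi : (3.141592:ℝ) ≤ π := Real.pi_gt_d6.le
    have h25 : (2.5:ℝ) ≤ Real.sqrt 2 * Real.sqrt π := by
      rw [← Real.sqrt_mul (by norm_num)]
      have : (2.5:ℝ)^2 ≤ 2 * π := by nlinarith
      nlinarith [Real.sq_sqrt (show (0:ℝ) ≤ 2 * π by linarith),
        Real.sqrt_nonneg (2*π)]
    have hs2pos : (0:ℝ) < Real.sqrt 2 := by positivity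
    rw [div_pow, hs2, div_le_iff₀ (by norm_num : (0:ℝ) < 2)]
    nlinarith [Real.exp_pos 1]
  have hsqrt2n : Real.sqrt 2 * (n:ℝ) = Real.sqrt (2 * n) * Real.sqrt n := by
    rw [Real.sqrt_mul (by norm_num), mul_assoc, Real.mul_self_sqrt hnR.le]
  -- combine
  have hppos : (0:ℝ) < Real.sqrt π * Real.sqrt (2 * n) := by positivity
  have H2 : Real.sqrt π * Real.sqrt (2 * n) * ((n:ℝ)^n)
      ≤ Real.sqrt π * Real.sqrt (2 * n) * (2 * Real.sqrt n * C * ((j:ℝ)^j * (k:ℝ)^k)) := by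
    calc Real.sqrt π * Real.sqrt (2 * n) * ((n:ℝ)^n)
        = Real.sqrt π * (Real.sqrt (2 * n) * (n : ℝ) ^ n) := by ring
      _ ≤ C * ((Real.exp 1 / Real.sqrt 2) * (Real.sqrt (2 * j) * (j : ℝ) ^ j))
          * ((Real.exp 1 / Real.sqrt 2) * (Real.sqrt (2 * k) * (k : ℝ) ^ k)) := H1
      _ = C * ((Real.exp 1 / Real.sqrt 2)^2) * (Real.sqrt (2 * j) * Real.sqrt (2 * k))
            * ((j:ℝ)^j * (k:ℝ)^k) := by ring
      _ ≤ C * (2 * Real.sqrt 2 * Real.sqrt π) * (n:ℝ) * ((j:ℝ)^j * (k:ℝ)^k) := by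
          have hcc : (0:ℝ) ≤ C * ((j:ℝ)^j * (k:ℝ)^k) := by positivity
          have hb1 : (0:ℝ) ≤ Real.sqrt (2*j) * Real.sqrt (2*k) := by positivity
          have hAB : (Real.exp 1 / Real.sqrt 2)^2 * (Real.sqrt (2*j) * Real.sqrt (2*k))
              ≤ (2 * Real.sqrt 2 * Real.sqrt π) * (n:ℝ) :=
            mul_le_mul hnum hjkle hb1 (by positivity)
          calc C * ((Real.exp 1 / Real.sqrt 2)^2) * (Real.sqrt (2 * j) * Real.sqrt (2 * k))
                * ((j:ℝ)^j * (k:ℝ)^k)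
              = ((Real.exp 1 / Real.sqrt 2)^2 * (Real.sqrt (2*j) * Real.sqrt (2*k)))
                * (C * ((j:ℝ)^j * (k:ℝ)^k)) := by ring
            _ ≤ ((2 * Real.sqrt 2 * Real.sqrt π) * (n:ℝ)) * (C * ((j:ℝ)^j * (k:ℝ)^k)) :=
                mul_le_mul_of_nonneg_right hAB hcc
            _ = C * (2 * Real.sqrt 2 * Real.sqrt π) * (n:ℝ) * ((j:ℝ)^j * (k:ℝ)^k) := by ring
      _ = Real.sqrt π * (Real.sqrt 2 * (n:ℝ)) * (2 * C * ((j:ℝ)^j * (k:ℝ)^k)) := by ring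
      _ = Real.sqrt π * Real.sqrt (2 * n) * (2 * Real.sqrt n * C * ((j:ℝ)^j * (k:ℝ)^k)) := by
          rw [hsqrt2n]; ring
  have := (mul_le_mul_iff_right₀ hppos).mp H2
  linarith

lemma key_id (n j k : ℕ) (hj : 0 < j) (hk : 0 < k) (h : j + k = n) :
    ((n : ℝ) ^ (1 - (j : ℝ) / n) * eta ((j : ℝ) / n)) ^ n
      = (j : ℝ) ^ k * (n : ℝ) ^ n / ((j : ℝ) ^ j * (k : ℝ) ^ k) := by
  have hn : 0 < n := by omega
  have hnR : (0:ℝ) < n := by exact_mod_cast hn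
  have hjR : (0:ℝ) < j := by exact_mod_cast hj
  have hkR : (0:ℝ) < k := by exact_mod_cast hk
  set x : ℝ := (j : ℝ) / n with hx
  have hx0 : 0 < x := by positivity
  have hx1 : 1 - x = (k : ℝ) / n := by
    rw [hx]; field_simp
    push_cast [← h]
    ring
  have hx1' : 0 < 1 - x := by rw [hx1]; positivity
  have hxn : x * n = (j : ℝ) := by rw [hx]; field_simp
  have hx1n : (1 - x) * n = (k : ℝ) := by rw [hx1]; field_simp
  have e1 : ((n : ℝ) ^ (1 - x) * eta x) ^ n
      = (n : ℝ) ^ ((1-x) * n) * (x ^ ((1-x)*n) * (x ^ (-x*n) * (1-x) ^ (-(1-x)*n))) := by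
    rw [eta, varphi]
    rw [← Real.rpow_natCast ((n : ℝ) ^ (1 - x) * (x ^ (1-x) * (x ^ (-x) * (1-x) ^ (-(1-x))))) n]
    rw [Real.mul_rpow (by positivity) (by positivity), Real.mul_rpow (by positivity) (by positivity),
      Real.mul_rpow (by positivity) (by positivity),
      ← Real.rpow_mul hnR.le, ← Real.rpow_mul hx0.le, ← Real.rpow_mul hx0.le,
      ← Real.rpow_mul hx1'.le]
  rw [e1, hx1n, neg_mul, neg_mul, hxn, hx1n]
  rw [Real.rpow_neg hx0.le, Real.rpow_neg hx1'.le,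
    Real.rpow_natCast, Real.rpow_natCast, Real.rpow_natCast, Real.rpow_natCast]
  rw [hx, hx1, div_pow, div_pow]
  have hnn : ((n:ℝ)^n) ≠ 0 := by positivity
  rw [← h]
  field_simp
  have hn0 : ((j + k : ℕ) : ℝ) ≠ 0 := by positivity
  rw [div_pow, pow_add, div_mul_eq_mul_div, eq_div_iff (pow_ne_zero _ hn0)]; ring

lemma nat_upper (n j k : ℕ) (h : j + k = n) :
    n.choose j * j ^ j * k ^ k ≤ n ^ n := by
  calc n.choose j * j ^ j * k ^ k = n.choose j * j ^ j * k ^ (n - j) := by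
        congr 2; omega
    _ ≤ ∑ i ∈ Finset.range (n+1), n.choose i * j ^ i * k ^ (n - i) := by
        refine Finset.single_le_sum (f := fun i => n.choose i * j ^ i * k ^ (n - i))
          (fun i _ => Nat.zero_le _) ?_
        simp; omega
    _ = (j + k) ^ n := by
        rw [add_pow]; apply Finset.sum_congr rfl; intro i _; push_cast [Nat.cast_id]; ring
    _ = n ^ n := by rw [h]

theorem stmt_9 (n j : ℕ) (hn : 2 ≤ n) (hj1 : 1 ≤ j) (hj2 : j ≤ n - 1) :
    (1 / (2 * Real.sqrt n)) * ((n : ℝ) ^ (1 - (j : ℝ) / n) * eta ((j : ℝ) / n)) ^ n ≤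
      (Nat.choose n j : ℝ) * (j : ℝ) ^ (n - j) ∧
    (Nat.choose n j : ℝ) * (j : ℝ) ^ (n - j) ≤
      ((n : ℝ) ^ (1 - (j : ℝ) / n) * eta ((j : ℝ) / n)) ^ n := by
  set k := n - j with hkdef
  have hjk : j + k = n := by omega
  have hk1 : 1 ≤ k := by omega
  have hnR : (0:ℝ) < n := by
    have : (0:ℕ) < n := by omega
    exact_mod_cast this
  have hjR : (0:ℝ) < j := by exact_mod_cast hj1
  have hkR : (0:ℝ) < k := by exact_mod_cast hk1
  have hX := key_id n j k hj1 hk1 hjk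
  have hd : (0:ℝ) < (j:ℝ)^j * (k:ℝ)^k := by positivity
  have hs : (0:ℝ) < 2 * Real.sqrt n := by positivity
  rw [hX]
  constructor
  · have main := choose_lower n j k hj1 hk1 hjk
    rw [div_mul_eq_mul_div, div_le_iff₀ hs, one_mul, div_le_iff₀ hd]
    calc (j:ℝ)^k * (n:ℝ)^n
        ≤ (j:ℝ)^k * (2 * Real.sqrt n * (n.choose j : ℝ) * ((j:ℝ)^j * (k:ℝ)^k)) :=
          mul_le_mul_of_nonneg_left main (by positivity)
      _ = (n.choose j : ℝ) * (j:ℝ)^k * (2 * Real.sqrt n) * ((j:ℝ)^j * (k:ℝ)^k) := by ring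
  · rw [le_div_iff₀ hd]
    have hu : ((n.choose j : ℕ) : ℝ) * (j:ℝ)^j * (k:ℝ)^k ≤ (n:ℝ)^n := by
      have := nat_upper n j k hjk
      exact_mod_cast this
    calc (n.choose j : ℝ) * (j:ℝ)^k * ((j:ℝ)^j * (k:ℝ)^k)
        = (j:ℝ)^k * ((n.choose j : ℝ) * (j:ℝ)^j * (k:ℝ)^k) := by ring
      _ ≤ (j:ℝ)^k * (n:ℝ)^n := mul_le_mul_of_nonneg_left hu (by positivity)
      _ = (j:ℝ)^k * (n:ℝ)^n := rfl
end
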